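/- Let L = X ⋉_φ N be the external semidirect product of partial groups X and N via a homomorphism φ: X → Aut(N). If Y is a partial subgroup of X and M is a partial subgroup of N with Y ⊆ N_X(M) (every element of Y normalizes M under the action φ), then (Y, M) = {(y,m) : y ∈ Y, m ∈ M} is a partial subgroup of L. -/

import Mathlib

universe u v

/-- A partial group: a set `L` with a domain `D ⊆ W(L)` of words, a (total extension of the)
partial product `Pi`, and an involutory inversion, satisfying axioms (PG1)-(PG4).
The value of `Pi` outside `D` is irrelevant. -/
structure PartialGroup (L : Type u) : Type u where
  D : Set (List L)
  Pi : List L → L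
  inv : L → L
  inv_inv : ∀ g, inv (inv g) = g
  singleton_mem : ∀ g, [g] ∈ D
  append_left_mem : ∀ {u v : List L}, u ++ v ∈ D → u ∈ D
  append_right_mem : ∀ {u v : List L}, u ++ v ∈ D → v ∈ D
  Pi_singleton : ∀ g, Pi [g] = g
  pg3_mem : ∀ u v w : List L, u ++ v ++ w ∈ D → u ++ [Pi v] ++ w ∈ D
  pg3_eq : ∀ u v w : List L, u ++ v ++ w ∈ D → Pi (u ++ v ++ w) = Pi (u ++ [Pi v] ++ w)
  pg4_mem : ∀ w ∈ D, (List.map inv w).reverse ++ w ∈ D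
  pg4_eq : ∀ w ∈ D, Pi ((List.map inv w).reverse ++ w) = Pi []

namespace PartialGroup

variable {L : Type u} {L' : Type v}

/-- Inversion of a word: `(g_1,...,g_k)⁻¹ = (g_k⁻¹,...,g_1⁻¹)`. -/
def wInv (P : PartialGroup L) (w : List L) : List L := (w.map P.inv).reverse

/-- The identity `1 = Π(∅)`. -/
def one (P : PartialGroup L) : L := P.Pi []

/-- Conjugation `x^g = Π(g⁻¹, x, g)`. -/
def cnj (P : PartialGroup L) (g x : L) : L := P.Pi [P.inv g, x, g]

/-- `x ∈ D(g)`, i.e. `(g⁻¹, x, g) ∈ D(L)`. -/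
def memD (P : PartialGroup L) (g x : L) : Prop := [P.inv g, x, g] ∈ P.D

/-- `H` is a partial subgroup of `L`. -/
def IsPartialSubgroup (P : PartialGroup L) (H : Set L) : Prop :=
  H.Nonempty ∧ (∀ g ∈ H, P.inv g ∈ H) ∧ ∀ w ∈ P.D, (∀ x ∈ w, x ∈ H) → P.Pi w ∈ H

/-- `N` is a partial normal subgroup of `L`. -/
def IsPartialNormal (P : PartialGroup L) (N : Set L) : Prop :=
  P.IsPartialSubgroup N ∧ ∀ g : L, ∀ n ∈ N, P.memD g n → P.cnj g n ∈ N

/-- `H` is a subgroup of `L`: a partial subgroup with `W(H) ⊆ D(L)`. -/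
def IsSubgroup (P : PartialGroup L) (H : Set L) : Prop :=
  P.IsPartialSubgroup H ∧ ∀ w : List L, (∀ x ∈ w, x ∈ H) → w ∈ P.D

/-- Homomorphism of partial groups. -/
def IsHom (P : PartialGroup L) (P' : PartialGroup L') (φ : L → L') : Prop :=
  ∀ w ∈ P.D, w.map φ ∈ P'.D ∧ φ (P.Pi w) = P'.Pi (w.map φ)

/-- Isomorphism of partial groups: a bijective homomorphism with `D(L)^φ = D(L')`. -/
def IsIso (P : PartialGroup L) (P' : PartialGroup L') (φ : L → L') : Prop :=
  Function.Bijective φ ∧ P.IsHom P' φ ∧ List.map φ '' P.D = P'.D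

end PartialGroup

open PartialGroup

/-- A partial group `X` acts on a partial group `N` via `a : X → N → N`: each `a x` is an
automorphism of `N`, and `x ↦ a x` is a homomorphism of partial groups from `X` to `Aut(N)`
(the latter carrying the full domain; products in `Aut(N)` are composed left-to-right,
matching the exponential notation `n^{c₁c₂} = (n^{c₁})^{c₂}`). -/
def IsAction {X : Type u} {N : Type v} (PX : PartialGroup X) (PN : PartialGroup N)
    (a : X → N → N) : Prop :=
  (∀ x, PN.IsIso PN (a x)) ∧
    ∀ w ∈ PX.D, ∀ n, a (PX.Pi w) n = w.foldl (fun m x => a x m) n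

/-- For `w = ((x₁,f₁),...,(xₙ,fₙ))`, the word
`w_N = (f₁^{(x₂⋯xₙ)^φ}, f₂^{(x₃⋯xₙ)^φ}, ..., fₙ)`. -/
def sdN {X : Type u} {N : Type v} (PX : PartialGroup X) (a : X → N → N) :
    List (X × N) → List N
  | [] => []
  | q :: rest => a (PX.Pi (rest.map Prod.fst)) q.2 :: sdN PX a rest

/-- `PL` is the external semidirect product `X ⋉_a N`: underlying set `X × N`,
domain `{w : w_X ∈ D(X) ∧ w_N ∈ D(N)}`, product `Π(w) = (Π_X(w_X), Π_N(w_N))`,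
inversion `(x,f)⁻¹ = (x⁻¹, (f⁻¹)^{(x⁻¹)^φ})`. -/
def IsExtSemidirect {X : Type u} {N : Type v} (PX : PartialGroup X) (PN : PartialGroup N)
    (a : X → N → N) (PL : PartialGroup (X × N)) : Prop :=
  PL.D = {w | w.map Prod.fst ∈ PX.D ∧ sdN PX a w ∈ PN.D} ∧
  (∀ w ∈ PL.D, PL.Pi w = (PX.Pi (w.map Prod.fst), PN.Pi (sdN PX a w))) ∧
  ∀ p : X × N, PL.inv p = (PX.inv p.1, a (PX.inv p.1) (PN.inv p.2))

theorem stmt8 {X : Type u} {N : Type v} (PX : PartialGroup X) (PN : PartialGroup N)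
    (a : X → N → N) (ha : IsAction PX PN a)
    (PL : PartialGroup (X × N)) (hL : IsExtSemidirect PX PN a PL)
    (Y : Set X) (M : Set N) (hY : PX.IsPartialSubgroup Y) (hM : PN.IsPartialSubgroup M)
    (hnorm : ∀ y ∈ Y, a y '' M = M) :
    PL.IsPartialSubgroup (Y ×ˢ M) := by
  obtain ⟨hD, hPi, hinv⟩ := hL
  obtain ⟨⟨y0, hy0⟩, hYinv, hYPi⟩ := hY
  obtain ⟨⟨m0, hm0⟩, hMinv, hMPi⟩ := hM
  have key : ∀ w : List (X × N), w.map Prod.fst ∈ PX.D →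
      (∀ p ∈ w, p ∈ Y ×ˢ M) → ∀ n ∈ sdN PX a w, n ∈ M := by
    intro w
    induction w with
    | nil => intro _ _ n hn; simp [sdN] at hn
    | cons q rest ih =>
      intro hw hall n hn
      have hrest : rest.map Prod.fst ∈ PX.D := by
        have := PX.append_right_mem (u := [q.1]) (v := rest.map Prod.fst)
        simp at hw ⊢
        exact this (by simpa using hw)
      simp only [sdN, List.mem_cons] at hn
      rcases hn with h | h
      · subst h
        have hy : PX.Pi (rest.map Prod.fst) ∈ Y := by
          apply hYPi _ hrest
          intro x hx
          simp only [List.mem_map] at hx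
          obtain ⟨p, hp, rfl⟩ := hx
          exact ((hall p (List.mem_cons_of_mem _ hp)).1)
        have hq2 : q.2 ∈ M := (hall q List.mem_cons_self).2
        have := hnorm _ hy
        rw [← this]
        exact ⟨q.2, hq2, rfl⟩
      · exact ih hrest (fun p hp => hall p (List.mem_cons_of_mem _ hp)) n h
  refine ⟨⟨(y0, m0), ⟨hy0, hm0⟩⟩, ?_, ?_⟩
  · rintro ⟨x, f⟩ ⟨hx, hf⟩
    rw [hinv]
    refine ⟨hYinv _ hx, ?_⟩
    have := hnorm _ (hYinv _ hx)
    rw [← this]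
    exact ⟨PN.inv f, hMinv _ hf, rfl⟩
  · intro w hw hall
    rw [hPi w hw]
    rw [hD] at hw
    exact ⟨hYPi _ hw.1 (fun x hx => by
        simp only [List.mem_map] at hx
        obtain ⟨p, hp, rfl⟩ := hx
        exact (hall p hp).1),
      hMPi _ hw.2 (key w hw.1 hall)⟩
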